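/- Let n ≥ 2. There exists a positive semidefinite matrix C⁰ = (c⁰_{jk}) ∈ 𝒢_(n)(ℝ) such that: (i) D(C⁰) = det C⁰ = 0; (ii) D_I(C⁰) > 0 for every subset I ⊆ {0,…,n} with 2 ≤ |I| ≤ n (in particular −1 < c⁰_{jk} < 1 for all j ≠ k); (iii) the mixed minor D_{{0,2,…,n},{1,2,…,n}}(C⁰) (rows {0,2,…,n}, columns {1,2,…,n}) is nonzero, so that the differential of the determinant at C⁰ is nonzero and C⁰ is a regular point of the hypersurface {det = 0}. Moreover, C⁰ lies in the boundary of the set 𝒞_{S^n} of positive definite matrices in 𝒢_(n)(ℝ). (Such C⁰ is obtained as the Gram matrix of n+1 unit vectors of ℝ^{n+1} lying in a common hyperplane so that every n of them are linearly independent.) -/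

import Mathlib

open Matrix Finset

section helpers

lemma det_unitDiag_const (α : Type*) [Fintype α] [DecidableEq α] (b : ℝ) (hb : b ≠ 1)
    (m : ℕ) (hm : Fintype.card α = m + 1) :
    (Matrix.of fun i j : α => if i = j then (1:ℝ) else b).det
      = (1 - b) ^ m * (1 + m * b) := by
  have h1b : (1:ℝ) - b ≠ 0 := sub_ne_zero.mpr (Ne.symm hb)
  have key : (Matrix.of fun i j : α => if i = j then (1:ℝ) else b)
      = (1 - b) • (1 + Matrix.replicateCol Unit (fun _ => b / (1 - b)) * Matrix.replicateRow Unit (fun _ => (1:ℝ))) := by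
    ext i j
    by_cases h : i = j <;>
      simp [h, Matrix.one_apply, Matrix.mul_apply, Matrix.replicateCol, Matrix.replicateRow] <;>
      field_simp <;>
      ring
  rw [key, Matrix.det_smul, Matrix.det_one_add_replicateCol_mul_replicateRow]
  have : (fun _ : α => (1:ℝ)) ⬝ᵥ (fun _ => b / (1 - b)) = (Fintype.card α : ℝ) * (b / (1-b)) := by
    simp [dotProduct, Finset.mul_sum]
  rw [this, hm]
  field_simp
  push_cast
  ring

lemma quadform_unitDiag_const (N : ℕ) (b : ℝ) (x : Fin N → ℝ) :
    x ⬝ᵥ ((Matrix.of fun i j : Fin N => if i = j then (1:ℝ) else b) *ᵥ x)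
      = (1 - b) * (∑ i, x i ^ 2) + b * (∑ i, x i) ^ 2 := by
  have hmv : ∀ i, ((Matrix.of fun i j : Fin N => if i = j then (1:ℝ) else b) *ᵥ x) i
      = (1 - b) * x i + b * ∑ j, x j := by
    intro i
    simp only [Matrix.mulVec, dotProduct, Matrix.of_apply]
    have : ∀ j, (if i = j then (1:ℝ) else b) * x j
        = (if j = i then (1 - b) * x j else 0) + b * x j := by
      intro j
      by_cases h : i = j <;> simp [h, eq_comm] <;> ring
    rw [Finset.sum_congr rfl fun j _ => this j, Finset.sum_add_distrib,
      Finset.sum_ite_eq' Finset.univ i (fun j => (1 - b) * x j)]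
    simp [Finset.mul_sum]
  simp only [dotProduct, hmv]
  simp only [mul_add, Finset.sum_add_distrib, ← Finset.sum_mul, Finset.mul_sum]
  congr 1
  · apply Finset.sum_congr rfl; intro i _; ring
  · rw [sq, Finset.sum_mul]
    rw [Finset.mul_sum]
    apply Finset.sum_congr rfl; intro i _
    rw [Finset.mul_sum, Finset.mul_sum]
    apply Finset.sum_congr rfl; intro j _
    ring

lemma det_arrow (N : ℕ) (b : ℝ) :
    (Matrix.of fun i j : Fin (N + 1) => if i = j ∧ i ≠ 0 then (1:ℝ) else b).det
      = b * (1 - b) ^ N := by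
  set E : Matrix (Fin (N+1)) (Fin (N+1)) ℝ :=
    Matrix.of fun i k => if k = 0 ∨ k = i then (1:ℝ) else 0 with hE
  set T : Matrix (Fin (N+1)) (Fin (N+1)) ℝ :=
    Matrix.of fun k j => if k = 0 then b else if k = j then 1 - b else 0 with hT
  have hfac : (Matrix.of fun i j : Fin (N+1) => if i = j ∧ i ≠ 0 then (1:ℝ) else b) = E * T := by
    ext i j
    rw [Matrix.mul_apply]
    have hterm : ∀ k, E i k * T k j = if k ∈ ({0, i} : Finset (Fin (N+1))) then T k j else 0 := by
      intro k
      simp only [hE, Matrix.of_apply, Finset.mem_insert, Finset.mem_singleton]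
      by_cases h : k = 0 ∨ k = i <;> simp [h]
    rw [Finset.sum_congr rfl fun k _ => hterm k, Finset.sum_ite_mem, Finset.univ_inter]
    by_cases hi : i = 0
    · subst hi
      simp [hT]
    · rw [Finset.sum_pair (Ne.symm hi)]
      by_cases hj : i = j
      · subst hj
        simp [hT, hi]
      · simp only [hT, Matrix.of_apply, if_pos rfl, if_neg hi, if_neg hj]
        simp [hj]
  have hdetE : E.det = 1 := by
    have htri : E.BlockTriangular OrderDual.toDual := by
      intro i j hij
      have hij' : i < j := hij
      have h1 : ¬ (j = 0) := by
        intro h; subst h; exact Fin.not_lt_zero i hij'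
      have h2 : ¬ (j = i) := fun h => lt_irrefl i (h ▸ hij')
      simp [hE, h1, h2]
    rw [Matrix.det_of_lowerTriangular E htri]
    have : ∀ i : Fin (N+1), E i i = 1 := fun i => by simp [hE]
    simp [this]
  have hdetT : T.det = b * (1 - b) ^ N := by
    have htri : T.BlockTriangular id := by
      intro i j hij
      have hij' : j < i := hij
      have h1 : ¬ (i = 0) := by
        intro h; subst h; exact Fin.not_lt_zero j hij'
      have h2 : ¬ (i = j) := fun h => lt_irrefl j (h ▸ hij')
      simp [hT, h1, h2]
    rw [Matrix.det_of_upperTriangular htri]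
    have hdiag : ∀ k : Fin (N+1), T k k = if k = 0 then b else 1 - b := by
      intro k; by_cases h : k = 0 <;> simp [hT, h]
    rw [Finset.prod_congr rfl fun k _ => hdiag k]
    rw [← Finset.prod_filter_mul_prod_filter_not Finset.univ (· = (0 : Fin (N+1)))]
    have h01 : (Finset.univ.filter (· = (0 : Fin (N+1)))) = {0} := by
      ext k; simp
    rw [h01]
    have : ∀ k ∈ Finset.univ.filter (¬ · = (0 : Fin (N+1))),
        (if k = 0 then b else 1 - b) = 1 - b := by
      intro k hk
      simp only [Finset.mem_filter] at hk
      simp [hk.2]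
    rw [Finset.prod_congr rfl this, Finset.prod_const]
    have hcard : (Finset.univ.filter (¬ · = (0 : Fin (N+1)))).card = N := by
      have := Finset.card_filter_add_card_filter_not
        (s := (Finset.univ : Finset (Fin (N+1)))) (p := (· = (0 : Fin (N+1))))
      rw [h01] at this
      simp only [Finset.card_singleton, Finset.card_univ, Fintype.card_fin] at this
      omega
    rw [hcard]
    simp
  rw [hfac, Matrix.det_mul, hdetE, hdetT, one_mul]

end helpers


/-- The principal minor `D_I(C)` of a matrix `C` on the rows and columns with
indices in the subset `I ⊆ {0, …, n}`. -/
noncomputable def principalMinor (n : ℕ) (I : Finset (Fin (n + 1)))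
    (C : Matrix (Fin (n + 1)) (Fin (n + 1)) ℝ) : ℝ :=
  (C.submatrix (fun i : I => (i : Fin (n + 1))) (fun i : I => (i : Fin (n + 1)))).det

/-- The mixed minor `D_{{0,2,…,n},{1,2,…,n}}(C)`: rows `{0,2,…,n}`, columns
`{1,2,…,n}` (each taken in increasing order). -/
noncomputable def mixedMinor (n : ℕ) (C : Matrix (Fin (n + 1)) (Fin (n + 1)) ℝ) : ℝ :=
  (C.submatrix
    (fun i : Fin n => if i.val = 0 then (0 : Fin (n + 1)) else i.succ)
    (fun i : Fin n => (i : Fin n).succ)).det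

/-- The set `𝒞_{S^n}` of Gram matrices of vertices of non-degenerate simplices
in the unit sphere `S^n`: positive definite real symmetric matrices with units
on the diagonal. -/
def sphericalGram (n : ℕ) : Set (Matrix (Fin (n + 1)) (Fin (n + 1)) ℝ) :=
  {C | C.IsSymm ∧ (∀ j, C j j = 1) ∧ C.PosDef}

/-- For `n ≥ 2` there exists a positive semidefinite real
symmetric matrix `C⁰` with unit diagonal such that: (i) `det C⁰ = 0`;
(ii) `D_I(C⁰) > 0` for every `I` with `2 ≤ |I| ≤ n` (in particular
`-1 < c⁰_{jk} < 1` for `j ≠ k`); (iii) the mixed minor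
`D_{{0,2,…,n},{1,2,…,n}}(C⁰)` is nonzero (so `C⁰` is a regular point of the
hypersurface `{det = 0}`).  Moreover `C⁰` lies in the boundary of `𝒞_{S^n}`:
it belongs to the closure of `𝒞_{S^n}` but not to `𝒞_{S^n}`. -/
theorem boundary_point_spherical_gram
    (n : ℕ) (hn : 2 ≤ n) :
    ∃ C : Matrix (Fin (n + 1)) (Fin (n + 1)) ℝ,
      C.IsSymm ∧ (∀ j, C j j = 1) ∧ C.PosSemidef ∧
      C.det = 0 ∧
      (∀ I : Finset (Fin (n + 1)), 2 ≤ I.card → I.card ≤ n →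
        0 < principalMinor n I C) ∧
      (∀ j k, j ≠ k → -1 < C j k ∧ C j k < 1) ∧
      mixedMinor n C ≠ 0 ∧
      C ∈ closure (sphericalGram n) ∧ C ∉ sphericalGram n := by
  obtain ⟨N, rfl⟩ : ∃ N, n = N + 1 := ⟨n - 1, by omega⟩
  have hnR : (2:ℝ) ≤ ((N:ℝ) + 1) := by exact_mod_cast hn
  have hn0 : (0:ℝ) < (N:ℝ) + 1 := by linarith
  set b : ℝ := -(1 / ((N:ℝ) + 1)) with hbdef
  have hbneg : b < 0 := by
    have : (0:ℝ) < 1 / ((N:ℝ) + 1) := by positivity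
    rw [hbdef]; linarith
  have hbgt : -1 < b := by
    have h1 : 1 / ((N:ℝ) + 1) < 1 := by
      rw [div_lt_one hn0]; linarith
    rw [hbdef]; linarith
  have hb1 : b ≠ 1 := by linarith
  have h1b : (0:ℝ) < 1 - b := by linarith
  set C : Matrix (Fin (N + 1 + 1)) (Fin (N + 1 + 1)) ℝ :=
    Matrix.of fun i j => if i = j then (1:ℝ) else b with hC
  have hsymm : C.IsSymm := by
    ext i j
    simp only [hC, Matrix.transpose_apply, Matrix.of_apply]
    exact if_congr eq_comm rfl rfl
  have hherm : C.IsHermitian := by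
    ext i j
    simp only [hC, Matrix.conjTranspose_apply, Matrix.of_apply, star_trivial]
    exact if_congr eq_comm rfl rfl
  have hdiag : ∀ j, C j j = 1 := fun j => by simp [hC]
  have hquad : ∀ x : Fin (N + 1 + 1) → ℝ, 0 ≤ x ⬝ᵥ (C *ᵥ x) := by
    intro x
    rw [hC, quadform_unitDiag_const]
    have hcs : (∑ i, x i) ^ 2 ≤ ((N:ℝ) + 1 + 1) * ∑ i, x i ^ 2 := by
      have := sq_sum_le_card_mul_sum_sq
        (s := (Finset.univ : Finset (Fin (N + 1 + 1)))) (f := x)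
      simp only [Finset.card_univ, Fintype.card_fin] at this
      exact_mod_cast this
    have hs2 : (0:ℝ) ≤ ∑ i, x i ^ 2 := by positivity
    have h1n : (0:ℝ) < 1 / ((N:ℝ) + 1) := by positivity
    have key := mul_le_mul_of_nonneg_left hcs h1n.le
    have heq : (1 / ((N:ℝ) + 1)) * (((N:ℝ) + 1 + 1) * ∑ i, x i ^ 2)
        = (1 + 1 / ((N:ℝ) + 1)) * ∑ i, x i ^ 2 := by
      field_simp
    rw [hbdef]
    nlinarith [key, heq, hs2]
  have hpsd : C.PosSemidef := by
    refine Matrix.posSemidef_iff_dotProduct_mulVec.mpr ⟨hherm, fun x => ?_⟩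
    have := hquad x
    simpa [star_trivial] using this
  have hdetC : C.det = 0 := by
    rw [hC, det_unitDiag_const _ b hb1 (N + 1) (by simp)]
    have hz : 1 + ((N:ℝ) + 1) * b = 0 := by
      rw [hbdef]; field_simp; ring
    have : ((N + 1 : ℕ) : ℝ) * b = ((N:ℝ) + 1) * b := by push_cast; ring
    rw [this, hz, mul_zero]
  have hminor : ∀ I : Finset (Fin (N + 1 + 1)), 2 ≤ I.card → I.card ≤ N + 1 →
      0 < principalMinor (N + 1) I C := by
    intro I h2 hcard
    obtain ⟨m, hm⟩ : ∃ m, I.card = m + 1 := ⟨I.card - 1, by omega⟩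
    have hsub : C.submatrix (fun i : I => (i : Fin (N + 1 + 1)))
        (fun i : I => (i : Fin (N + 1 + 1)))
        = Matrix.of fun i j : I => if i = j then (1:ℝ) else b := by
      ext i j
      simp only [Matrix.submatrix_apply, hC, Matrix.of_apply]
      exact if_congr Subtype.coe_inj rfl rfl
    rw [principalMinor, hsub,
      det_unitDiag_const _ b hb1 m (by rw [Fintype.card_coe]; exact hm)]
    have hmn : (m:ℝ) < (N:ℝ) + 1 := by
      have : m < N + 1 := by omega
      exact_mod_cast this
    have hpos2 : 0 < 1 + (m:ℝ) * b := by
      have hlt : (m:ℝ) * (1 / ((N:ℝ) + 1)) < 1 := by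
        rw [mul_one_div, div_lt_one hn0]; exact hmn
      rw [hbdef]; nlinarith [hlt]
    exact mul_pos (pow_pos h1b m) hpos2
  have hentries : ∀ j k, j ≠ k → -1 < C j k ∧ C j k < 1 := by
    intro j k hjk
    have : C j k = b := by simp [hC, hjk]
    rw [this]; exact ⟨hbgt, by linarith⟩
  have hmixed : mixedMinor (N + 1) C ≠ 0 := by
    have hsub : (C.submatrix
        (fun i : Fin (N + 1) => if i.val = 0 then (0 : Fin (N + 1 + 1)) else i.succ)
        (fun i : Fin (N + 1) => i.succ))
        = Matrix.of fun i j : Fin (N + 1) => if i = j ∧ i ≠ 0 then (1:ℝ) else b := by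
      ext i j
      simp only [Matrix.submatrix_apply, hC, Matrix.of_apply]
      by_cases h0 : i.val = 0
      · have hi0 : i = 0 := by
          ext; simpa using h0
        rw [if_pos h0]
        have hne : (0 : Fin (N + 1 + 1)) ≠ j.succ := (Fin.succ_ne_zero j).symm
        rw [if_neg hne, if_neg (by simp [hi0])]
      · rw [if_neg h0]
        have hi0 : i ≠ 0 := fun h => h0 (by simp [h])
        by_cases hij : i = j
        · subst hij; rw [if_pos rfl, if_pos ⟨rfl, hi0⟩]
        · rw [if_neg (fun h => hij (Fin.succ_injective _ h)),
            if_neg (by tauto)]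
    rw [mixedMinor, hsub, det_arrow]
    exact mul_ne_zero (ne_of_lt hbneg) (pow_ne_zero _ (ne_of_gt h1b))
  have hmem : ∀ t : ℝ, t ∈ Set.Ioo (0:ℝ) 1 →
      ((1 - t) • C + t • (1 : Matrix (Fin (N + 1 + 1)) (Fin (N + 1 + 1)) ℝ))
        ∈ sphericalGram (N + 1) := by
    intro t ht
    obtain ⟨ht0, ht1⟩ := ht
    refine ⟨(hsymm.smul (1 - t)).add (Matrix.isSymm_one.smul t), fun j => ?_, Matrix.posDef_iff_dotProduct_mulVec.mpr ⟨?_, ?_⟩⟩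
    · simp [Matrix.add_apply, Matrix.smul_apply, hdiag j, Matrix.one_apply_eq]
    · rw [Matrix.IsHermitian, Matrix.conjTranspose_add, Matrix.conjTranspose_smul,
        Matrix.conjTranspose_smul, Matrix.conjTranspose_one, hherm.eq]
      simp [star_trivial]
    · intro x hx
      have hq : star x ⬝ᵥ (((1 - t) • C
            + t • (1 : Matrix (Fin (N + 1 + 1)) (Fin (N + 1 + 1)) ℝ)) *ᵥ x)
          = (1 - t) * (x ⬝ᵥ (C *ᵥ x)) + t * (x ⬝ᵥ x) := by
        simp [Matrix.add_mulVec, Matrix.smul_mulVec, dotProduct_add, dotProduct_smul,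
          Matrix.one_mulVec, smul_eq_mul, star_trivial]
      rw [hq]
      have h1 : 0 < x ⬝ᵥ x := by
        have h := Matrix.dotProduct_star_self_pos_iff (v := x)
        simp only [star_trivial] at h
        exact h.mpr hx
      have h2 := hquad x
      nlinarith [mul_nonneg (by linarith : (0:ℝ) ≤ 1 - t) h2, mul_pos ht0 h1]
  have hcont : Continuous (fun t : ℝ =>
      (1 - t) • C + t • (1 : Matrix (Fin (N + 1 + 1)) (Fin (N + 1 + 1)) ℝ)) :=
    ((continuous_const.sub continuous_id).smul continuous_const).add
      (continuous_id.smul continuous_const)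
  have htend : Filter.Tendsto (fun t : ℝ =>
      (1 - t) • C + t • (1 : Matrix (Fin (N + 1 + 1)) (Fin (N + 1 + 1)) ℝ))
      (nhdsWithin 0 (Set.Ioi 0)) (nhds C) := by
    have h := (hcont.tendsto 0).mono_left
      (nhdsWithin_le_nhds (s := Set.Ioi (0:ℝ)))
    simpa using h
  have hclos : C ∈ closure (sphericalGram (N + 1)) :=
    mem_closure_of_tendsto htend (Filter.eventually_of_mem
      (Ioo_mem_nhdsGT_of_mem (by constructor <;> norm_num))
      (fun t ht => hmem t ht))
  have hnot : C ∉ sphericalGram (N + 1) := by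
    intro h
    have := h.2.2.det_pos
    rw [hdetC] at this
    exact lt_irrefl 0 this
  exact ⟨C, hsymm, hdiag, hpsd, hdetC, hminor, hentries, hmixed, hclos, hnot⟩
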